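/- Let (λ_q)_{q≥0} be a sequence of complex numbers and m a nonnegative integer. Then ∏_{k=0}^{2m-1} sin(λ_k) = (-1)^m · 2^{-2m} · Σ_{j=0}^{2^{2m} - 1} (-1)^{s(j)} · cos(Σ_{q=0}^{2m-1} σ_q(j)·λ_q). -/

import Mathlib

/-- `s j` is the sum of the binary digits of `j`. -/
def s (j : ℕ) : ℕ := (Nat.digits 2 j).sum

/-- `sigma j q = 2 e_q(j) - 1`, where `j = ∑_q e_q(j) 2^q` is the binary
expansion of `j`. -/
noncomputable def sigma (j q : ℕ) : ℂ := 2 * ((j.testBit q).toNat : ℂ) - 1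

open Finset Complex

lemma s_eq : ∀ (n j : ℕ), j < 2 ^ n → s j = ∑ q ∈ range n, (j.testBit q).toNat := by
  intro n
  induction n with
  | zero =>
    intro j hj
    interval_cases j
    simp [s]
  | succ n ih =>
    intro j hj
    rcases Nat.eq_zero_or_pos j with rfl | hj0
    · simp [s]
    · have hstep : s j = j % 2 + s (j / 2) := by
        unfold s
        rw [Nat.digits_def' (by norm_num : 1 < 2) hj0, List.sum_cons]
      have hdiv : j / 2 < 2 ^ n := by
        rw [Nat.div_lt_iff_lt_mul (by norm_num)]
        calc j < 2 ^ (n + 1) := hj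
        _ = 2 ^ n * 2 := by rw [pow_succ]
      rw [hstep, ih _ hdiv, Finset.sum_range_succ']
      have h0 : (j.testBit 0).toNat = j % 2 := by
        rw [Nat.toNat_testBit]; simp
      have h1 : ∀ q, ((j / 2).testBit q).toNat = (j.testBit (q + 1)).toNat := by
        intro q; rw [Nat.testBit_add_one]
      simp only [h1]
      omega

lemma sigma_factor (j q : ℕ) : sigma j q = (-1 : ℂ) ^ (1 + (j.testBit q).toNat) := by
  unfold sigma
  cases h : j.testBit q <;> simp <;> norm_num

lemma neg_one_pow_s {n j : ℕ} (hj : j < 2 ^ n) :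
    (-1 : ℂ) ^ s j = (-1 : ℂ) ^ n * ∏ q ∈ range n, sigma j q := by
  have hP : ∏ q ∈ range n, sigma j q
      = (-1 : ℂ) ^ (∑ q ∈ range n, (1 + (j.testBit q).toNat)) := by
    rw [← Finset.prod_pow_eq_pow_sum]
    exact Finset.prod_congr rfl fun q _ => sigma_factor j q
  rw [hP, Finset.sum_add_distrib, Finset.sum_const, card_range, smul_eq_mul, mul_one,
    ← s_eq n j hj, pow_add, ← mul_assoc, ← pow_add]
  have : (-1 : ℂ) ^ (n + n) = 1 := by
    rw [← two_mul, pow_mul, neg_one_sq, one_pow]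
  rw [this, one_mul]

lemma sin_eq' (z : ℂ) :
    Complex.sin z = (Complex.exp (z * Complex.I) - Complex.exp (-z * Complex.I))
      * (2 * Complex.I)⁻¹ := by
  rw [Complex.sin, eq_mul_inv_iff_mul_eq₀ (by simp [Complex.I_ne_zero] : (2 : ℂ) * Complex.I ≠ 0)]
  have h := Complex.I_mul_I
  linear_combination (Complex.exp (-z * Complex.I) - Complex.exp (z * Complex.I)) * h

lemma key (lam : ℕ → ℂ) (n : ℕ) :
    ∏ k ∈ range n, Complex.sin (lam k) =
      (2 * Complex.I)⁻¹ ^ n *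
        ∑ j ∈ range (2 ^ n), (∏ q ∈ range n, sigma j q) *
          Complex.exp ((∑ q ∈ range n, sigma j q * lam q) * Complex.I) := by
  induction n with
  | zero => simp
  | succ n ih =>
    have h2 : 2 ^ (n + 1) = 2 ^ n + 2 ^ n := by rw [pow_succ]; ring
    rw [Finset.prod_range_succ, ih, h2, Finset.sum_range_add]
    have e1 : ∀ j ∈ range (2 ^ n),
        (∏ q ∈ range (n + 1), sigma j q) *
          Complex.exp ((∑ q ∈ range (n + 1), sigma j q * lam q) * Complex.I)
        = (∏ q ∈ range n, sigma j q) *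
            Complex.exp ((∑ q ∈ range n, sigma j q * lam q) * Complex.I) *
            (-(Complex.exp (-lam n * Complex.I))) := by
      intro j hj
      rw [Finset.mem_range] at hj
      have hb : sigma j n = -1 := by
        unfold sigma; rw [Nat.testBit_lt_two_pow hj]; simp
      rw [Finset.prod_range_succ, Finset.sum_range_succ, hb]
      have harg : ((∑ q ∈ range n, sigma j q * lam q) + -1 * lam n) * Complex.I
          = (∑ q ∈ range n, sigma j q * lam q) * Complex.I + -lam n * Complex.I := by
        ring
      rw [harg, Complex.exp_add]
      ring
    have e2 : ∀ j ∈ range (2 ^ n),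
        (∏ q ∈ range (n + 1), sigma (2 ^ n + j) q) *
          Complex.exp ((∑ q ∈ range (n + 1), sigma (2 ^ n + j) q * lam q) * Complex.I)
        = (∏ q ∈ range n, sigma j q) *
            Complex.exp ((∑ q ∈ range n, sigma j q * lam q) * Complex.I) *
            Complex.exp (lam n * Complex.I) := by
      intro j hj
      rw [Finset.mem_range] at hj
      have hlow : ∀ q ∈ range n, sigma (2 ^ n + j) q = sigma j q := by
        intro q hq
        rw [Finset.mem_range] at hq
        unfold sigma
        rw [Nat.testBit_two_pow_add_gt hq]
      have hb : sigma (2 ^ n + j) n = 1 := by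
        unfold sigma
        rw [Nat.testBit_two_pow_add_eq, Nat.testBit_lt_two_pow hj]
        norm_num
      rw [Finset.prod_range_succ, Finset.sum_range_succ, hb,
        Finset.prod_congr rfl hlow,
        Finset.sum_congr rfl (fun q hq => by rw [hlow q hq])]
      have harg : ((∑ q ∈ range n, sigma j q * lam q) + 1 * lam n) * Complex.I
          = (∑ q ∈ range n, sigma j q * lam q) * Complex.I + lam n * Complex.I := by
        ring
      rw [harg, Complex.exp_add]
      ring
    rw [Finset.sum_congr rfl e1, Finset.sum_congr rfl e2,
      ← Finset.sum_mul, ← Finset.sum_mul, sin_eq' (lam n), pow_succ]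
    set S := ∑ j ∈ range (2 ^ n), (∏ q ∈ range n, sigma j q) *
      Complex.exp ((∑ q ∈ range n, sigma j q * lam q) * Complex.I) with hSdef
    ring

theorem stmt_8 (lam : ℕ → ℂ) (m : ℕ) :
    ∏ k ∈ Finset.range (2 * m), Complex.sin (lam k) =
      (-1 : ℂ) ^ m * (2 : ℂ) ^ (-(2 * m : ℤ)) *
        ∑ j ∈ Finset.range (2 ^ (2 * m)),
          (-1 : ℂ) ^ s j *
            Complex.cos (∑ q ∈ Finset.range (2 * m), sigma j q * lam q) := by
  have hc : ((2 * Complex.I)⁻¹) ^ (2 * m) = (-1 : ℂ) ^ m * (2 : ℂ) ^ (-(2 * m : ℤ)) := by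
    have h1 : (2 : ℂ) ^ (-(2 * m : ℤ)) = ((2 : ℂ) ^ (2 * m))⁻¹ := by
      rw [zpow_neg]
      norm_cast
    have h2 : ((-1 : ℂ) ^ m)⁻¹ = (-1 : ℂ) ^ m := by
      rw [← inv_pow, inv_neg, inv_one]
    rw [h1, inv_pow, mul_pow, pow_mul Complex.I 2, Complex.I_sq, mul_inv, h2, mul_comm]
  set n := 2 * m with hn
  have hPs : ∀ j, j < 2 ^ n → (-1 : ℂ) ^ s j = ∏ q ∈ range n, sigma j q := by
    intro j hj
    rw [neg_one_pow_s hj, hn, pow_mul, neg_one_sq, one_pow, one_mul]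
  have hmask : 2 ^ n - 1 < 2 ^ n := Nat.sub_lt (Nat.pow_pos (n := n) (by norm_num)) one_pos
  have hsig_xor : ∀ j, ∀ q ∈ range n, sigma (j ^^^ (2 ^ n - 1)) q = -sigma j q := by
    intro j q hq
    rw [Finset.mem_range] at hq
    unfold sigma
    rw [Nat.testBit_xor, Nat.testBit_two_pow_sub_one, decide_eq_true hq]
    cases j.testBit q <;> norm_num
  have hrefl : ∑ j ∈ range (2 ^ n), (∏ q ∈ range n, sigma j q) *
        Complex.exp (-(∑ q ∈ range n, sigma j q * lam q) * Complex.I)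
      = ∑ j ∈ range (2 ^ n), (∏ q ∈ range n, sigma j q) *
        Complex.exp ((∑ q ∈ range n, sigma j q * lam q) * Complex.I) := by
    refine Finset.sum_nbij' (fun j => j ^^^ (2 ^ n - 1)) (fun j => j ^^^ (2 ^ n - 1))
      ?_ ?_ ?_ ?_ ?_
    · intro a ha
      rw [Finset.mem_range] at ha ⊢
      exact Nat.xor_lt_two_pow ha hmask
    · intro a ha
      rw [Finset.mem_range] at ha ⊢
      exact Nat.xor_lt_two_pow ha hmask
    · intro a _; simp [Nat.xor_assoc]
    · intro a _; simp [Nat.xor_assoc]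
    · intro j hj
      rw [Finset.mem_range] at hj
      have hP : ∏ q ∈ range n, sigma (j ^^^ (2 ^ n - 1)) q
          = (-1 : ℂ) ^ n * ∏ q ∈ range n, sigma j q := by
        rw [Finset.prod_congr rfl (hsig_xor j),
          Finset.prod_congr rfl (fun q _ => (neg_one_mul (sigma j q)).symm),
          Finset.prod_mul_distrib, Finset.prod_const, card_range]
      have hS : ∑ q ∈ range n, sigma (j ^^^ (2 ^ n - 1)) q * lam q
          = -(∑ q ∈ range n, sigma j q * lam q) := by
        rw [← Finset.sum_neg_distrib]
        exact Finset.sum_congr rfl fun q hq => by rw [hsig_xor j q hq]; ring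
      rw [hP, hS]
      have hne : (-1 : ℂ) ^ n = 1 := by
        rw [hn, pow_mul, neg_one_sq, one_pow]
      rw [hne, one_mul]
  have hcos : ∀ j ∈ range (2 ^ n), (-1 : ℂ) ^ s j *
        Complex.cos (∑ q ∈ range n, sigma j q * lam q)
      = ((∏ q ∈ range n, sigma j q) *
          Complex.exp ((∑ q ∈ range n, sigma j q * lam q) * Complex.I) +
        (∏ q ∈ range n, sigma j q) *
          Complex.exp (-(∑ q ∈ range n, sigma j q * lam q) * Complex.I)) / 2 := by
    intro j hj
    rw [Finset.mem_range] at hj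
    rw [hPs j hj, Complex.cos]
    ring
  rw [key lam n, hc]
  congr 1
  rw [Finset.sum_congr rfl hcos, ← Finset.sum_div, Finset.sum_add_distrib, hrefl]
  ring
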